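/- arXiv:0811.4652 — 7 statements merged into one kernel-verified Lean document; each statement's English description precedes it below -/
import Mathlib

section
/- For n ≥ 2 and any fixed positive integer k, the identity G_n^{(k)}(x)·F_{n-2}(x^k) = G_{n-1}^{(k)}(x)·F_{n-1}(x^k) + (−1)^{n−1} holds as polynomials in x. -/
open Polynomial

theorem G_F_relation (k : ℕ) (hk : 1 ≤ k)
    (G F : ℕ → Polynomial ℝ)
    (hG0 : G 0 = -1) (hG1 : G 1 = X - 1)
    (hG : ∀ n, 2 ≤ n → G n = X ^ k * G (n - 1) + G (n - 2))
    (hF0 : F 0 = 1) (hF1 : F 1 = X)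
    (hF : ∀ n, 2 ≤ n → F n = X * F (n - 1) + F (n - 2)) :
    ∀ n, 2 ≤ n →
      G n * (F (n - 2)).comp (X ^ k) =
        G (n - 1) * (F (n - 1)).comp (X ^ k) + (-1 : Polynomial ℝ) ^ (n - 1) := by
  intro n hn
  induction n, hn using Nat.le_induction with
  | base =>
      have h2 := hG 2 (by norm_num)
      simp only [show 2 - 1 = 1 by rfl, show 2 - 2 = 0 by rfl] at h2 ⊢
      rw [h2, hG0, hG1, hF0, hF1]
      simp [X_comp]
      ring
  | succ n hn ih =>
      have ih := ih
      have hGn := hG (n + 1) (by omega)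
      simp only [Nat.add_sub_cancel, show n + 1 - 2 = n - 1 from by omega] at hGn
      have hFn := hF n hn
      have key : (F n).comp (X ^ k) =
          X ^ k * (F (n - 1)).comp (X ^ k) + (F (n - 2)).comp (X ^ k) := by
        rw [hFn]; simp [add_comp, mul_comp, X_comp]
      have hn1 : n + 1 - 2 = n - 1 := by omega
      have hsign : (-1 : Polynomial ℝ) ^ n = -(-1 : Polynomial ℝ) ^ (n - 1) := by
        conv_lhs => rw [show n = (n - 1) + 1 by omega]
        rw [pow_succ]; ring
      rw [hn1, Nat.add_sub_cancel, hGn, key, hsign]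
      linear_combination -ih
end

section
/- For n ≥ 2 and fixed positive integer k, the identity F_{2n-3}(x^k)·G_{2n}^{(k)}(x) = F_{2n-1}(x^k)·G_{2n-2}^{(k)}(x) + x^k holds as polynomials in x. -/
open Polynomial

theorem even_index_relation (k : ℕ) (hk : 1 ≤ k)
    (G F : ℕ → Polynomial ℝ)
    (hG0 : G 0 = -1) (hG1 : G 1 = X - 1)
    (hG : ∀ n, 2 ≤ n → G n = X ^ k * G (n - 1) + G (n - 2))
    (hF0 : F 0 = 1) (hF1 : F 1 = X)
    (hF : ∀ n, 2 ≤ n → F n = X * F (n - 1) + F (n - 2)) :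
    ∀ n, 2 ≤ n →
      (F (2 * n - 3)).comp (X ^ k) * G (2 * n) =
        (F (2 * n - 1)).comp (X ^ k) * G (2 * n - 2) + X ^ k := by
  have hG4 : ∀ m, G (m + 4) = (X ^ k * X ^ k + 2) * G (m + 2) - G m := by
    intro m
    have h2 : G (m + 2) = X ^ k * G (m + 1) + G m := hG (m + 2) (by omega)
    have h3 : G (m + 3) = X ^ k * G (m + 2) + G (m + 1) := hG (m + 3) (by omega)
    have h4 : G (m + 4) = X ^ k * G (m + 3) + G (m + 2) := hG (m + 4) (by omega)
    rw [h3] at h4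
    linear_combination h4 - h2
  have hF4 : ∀ m, F (m + 4) = (X * X + 2) * F (m + 2) - F m := by
    intro m
    have h2 : F (m + 2) = X * F (m + 1) + F m := hF (m + 2) (by omega)
    have h3 : F (m + 3) = X * F (m + 2) + F (m + 1) := hF (m + 3) (by omega)
    have h4 : F (m + 4) = X * F (m + 3) + F (m + 2) := hF (m + 4) (by omega)
    rw [h3] at h4
    linear_combination h4 - h2
  have key : ∀ m, (F (2 * m + 1)).comp (X ^ k) * G (2 * m + 4) =
      (F (2 * m + 3)).comp (X ^ k) * G (2 * m + 2) + X ^ k := by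
    intro m
    induction m with
    | zero =>
      norm_num
      have eG2 : G 2 = X ^ k * (X - 1) + (-1) := by
        have := hG 2 le_rfl; rwa [hG1, hG0] at this
      have eG3 : G 3 = X ^ k * G 2 + (X - 1) := by
        have := hG 3 (by omega); rwa [hG1] at this
      have eG4 : G 4 = X ^ k * G 3 + G 2 := hG 4 (by omega)
      have eF2 : F 2 = X * X + 1 := by
        have := hF 2 le_rfl; rwa [hF1, hF0] at this
      have eF3 : F 3 = X * (X * X + 1) + X := by
        have := hF 3 (by omega); rwa [eF2, hF1] at this
      rw [eG4, eG3, eG2, eF3, hF1]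
      simp only [add_comp, mul_comp, X_comp, one_comp]
      ring
    | succ m ih =>
      simp only [show 2 * (m + 1) + 1 = 2 * m + 3 from by ring,
        show 2 * (m + 1) + 4 = 2 * m + 2 + 4 from by ring,
        show 2 * (m + 1) + 3 = 2 * m + 1 + 4 from by ring,
        show 2 * (m + 1) + 2 = 2 * m + 4 from by ring]
      rw [hG4 (2 * m + 2), hF4 (2 * m + 1),
        show 2 * m + 2 + 2 = 2 * m + 4 from by ring,
        show 2 * m + 1 + 2 = 2 * m + 3 from by ring]
      simp only [sub_comp, add_comp, mul_comp, X_comp]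
      have h2comp : ((2 : Polynomial ℝ)).comp (X ^ k) = 2 := by
        simp
      rw [h2comp]
      linear_combination ih
  intro n hn
  obtain ⟨m, rfl⟩ : ∃ m, n = m + 2 := ⟨n - 2, by omega⟩
  simp only [show 2 * (m + 2) - 3 = 2 * m + 1 from by omega,
    show 2 * (m + 2) = 2 * m + 4 from by omega,
    show 2 * (m + 2) - 1 = 2 * m + 3 from by omega,
    show 2 * (m + 2) - 2 = 2 * m + 2 from by omega]
  exact key m
end

section
/- For n ≥ 1 and fixed positive integer k, the identity F_{2n-2}(x^k)·G_{2n+1}^{(k)}(x) = F_{2n}(x^k)·G_{2n-1}^{(k)}(x) − x^k holds as polynomials in x. -/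
open Polynomial

theorem odd_index_relation (k : ℕ) (hk : 1 ≤ k)
    (G F : ℕ → Polynomial ℝ)
    (hG0 : G 0 = -1) (hG1 : G 1 = X - 1)
    (hG : ∀ n, 2 ≤ n → G n = X ^ k * G (n - 1) + G (n - 2))
    (hF0 : F 0 = 1) (hF1 : F 1 = X)
    (hF : ∀ n, 2 ≤ n → F n = X * F (n - 1) + F (n - 2)) :
    ∀ n, 1 ≤ n →
      (F (2 * n - 2)).comp (X ^ k) * G (2 * n + 1) =
        (F (2 * n)).comp (X ^ k) * G (2 * n - 1) - X ^ k := by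
  have key : ∀ m, (F m).comp (X ^ k) * G (m + 2) -
      (F (m + 1)).comp (X ^ k) * G (m + 1) = (-1) ^ (m + 1) := by
    intro m
    induction m with
    | zero =>
      have h2 := hG 2 (by norm_num)
      norm_num at h2
      rw [h2, hF0, hF1, hG1, hG0]
      simp only [one_comp, X_comp]
      ring
    | succ m ih =>
      have hG' := hG (m + 3) (by omega)
      have hF' := hF (m + 2) (by omega)
      simp only [show m + 3 - 1 = m + 2 from rfl, show m + 3 - 2 = m + 1 from rfl,
        show m + 2 - 1 = m + 1 from rfl, show m + 2 - 2 = m from rfl] at hG' hF'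
      rw [show m + 1 + 2 = m + 3 from rfl, hG', hF']
      simp only [add_comp, mul_comp, X_comp]
      linear_combination (-1 : Polynomial ℝ) * ih
  intro n hn
  obtain ⟨m, rfl⟩ := Nat.exists_eq_add_of_le hn
  have hmm : 2 * (1 + m) - 2 = 2 * m := by omega
  have hmm2 : 2 * (1 + m) = 2 * m + 2 := by omega
  have hmm3 : 2 * (1 + m) + 1 = 2 * m + 3 := by omega
  have hmm4 : 2 * (1 + m) - 1 = 2 * m + 1 := by omega
  rw [hmm, hmm3, hmm4, hmm2]
  have hk := key (2 * m)
  rw [show (-1 : Polynomial ℝ) ^ (2 * m + 1) = -1 from Odd.neg_one_pow ⟨m, by ring⟩] at hk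
  have hG' := hG (2 * m + 3) (by omega)
  have hF' := hF (2 * m + 2) (by omega)
  simp only [show 2 * m + 3 - 1 = 2 * m + 2 from rfl, show 2 * m + 3 - 2 = 2 * m + 1 from rfl,
    show 2 * m + 2 - 1 = 2 * m + 1 from rfl, show 2 * m + 2 - 2 = 2 * m from rfl] at hG' hF'
  rw [hG', hF']
  simp only [add_comp, mul_comp, X_comp]
  linear_combination (X : Polynomial ℝ) ^ k * hk
end

section
/- Fix a positive integer k and let g_n denote the maximal real root of G_n^{(k)}. Then the sequence (g_{2n})_{n≥1} is strictly decreasing. -/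
section
variable {k : ℕ} {G : ℕ → ℝ → ℝ} {g : ℕ → ℝ}

lemma contG (hG0 : ∀ x, G 0 x = -1) (hG1 : ∀ x, G 1 x = x - 1)
    (hG : ∀ n, 2 ≤ n → ∀ x, G n x = x ^ k * G (n - 1) x + G (n - 2) x) :
    ∀ n, Continuous (G n) := by
  intro n
  induction n using Nat.strong_induction_on with
  | _ n ih =>
    match n with
    | 0 =>
      have h : G 0 = fun _ => (-1 : ℝ) := funext hG0
      rw [h]; exact continuous_const
    | 1 =>
      have h : G 1 = fun x => x - 1 := funext hG1
      rw [h]; fun_prop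
    | (m + 2) =>
      have h : G (m + 2) = fun x => x ^ k * G (m + 1) x + G m x := by
        funext x
        have := hG (m + 2) (by omega) x
        simpa using this
      rw [h]
      exact ((continuous_pow k).mul (ih (m + 1) (by omega))).add (ih m (by omega))

lemma bigG (hk : 1 ≤ k) (hG0 : ∀ x, G 0 x = -1) (hG1 : ∀ x, G 1 x = x - 1)
    (hG : ∀ n, 2 ≤ n → ∀ x, G n x = x ^ k * G (n - 1) x + G (n - 2) x) :
    ∀ n, ∀ x : ℝ, 2 ≤ x → -1 ≤ G n x ∧ (1 ≤ n → 1 ≤ G n x) := by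
  intro n
  induction n using Nat.strong_induction_on with
  | _ n ih =>
    match n with
    | 0 => intro x hx; rw [hG0]; exact ⟨le_refl _, by omega⟩
    | 1 => intro x hx; rw [hG1]; constructor <;> intros <;> linarith
    | (m + 2) =>
      intro x hx
      have e : G (m + 2) x = x ^ k * G (m + 1) x + G m x := by
        have := hG (m + 2) (by omega) x
        simpa using this
      have h1 : 1 ≤ G (m + 1) x := (ih (m + 1) (by omega) x hx).2 (by omega)
      have h0 : -1 ≤ G m x := (ih m (by omega) x hx).1
      have hxk : (2 : ℝ) ≤ x ^ k := le_trans hx (le_self_pow₀ (by linarith) (by omega))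
      have : 1 ≤ G (m + 2) x := by nlinarith
      exact ⟨by linarith, fun _ => this⟩

lemma oneG (hG0 : ∀ x, G 0 x = -1) (hG1 : ∀ x, G 1 x = x - 1)
    (hG : ∀ n, 2 ≤ n → ∀ x, G n x = x ^ k * G (n - 1) x + G (n - 2) x) :
    ∀ n, G n 1 ≤ 0 ∧ (n ≠ 1 → G n 1 ≤ -1) := by
  intro n
  induction n using Nat.strong_induction_on with
  | _ n ih =>
    match n with
    | 0 => rw [hG0]; norm_num
    | 1 => rw [hG1]; norm_num
    | (m + 2) =>
      have e : G (m + 2) 1 = G (m + 1) 1 + G m 1 := by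
        have := hG (m + 2) (by omega) 1
        simpa using this
      match m with
      | 0 =>
        rw [e, hG1, hG0]; norm_num
      | (p + 1) =>
        have h1 := (ih (p + 2) (by omega)).2 (by omega)
        have h0 := (ih (p + 1) (by omega)).1
        rw [e]
        constructor
        · linarith
        · intro _; linarith

lemma rootAbove (hk : 1 ≤ k) (hG0 : ∀ x, G 0 x = -1) (hG1 : ∀ x, G 1 x = x - 1)
    (hG : ∀ n, 2 ≤ n → ∀ x, G n x = x ^ k * G (n - 1) x + G (n - 2) x)
    (hg : ∀ n, 1 ≤ n → G n (g n) = 0 ∧ ∀ x : ℝ, G n x = 0 → x ≤ g n) :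
    ∀ n, 1 ≤ n → ∀ a : ℝ, a < 2 → G n a < 0 → a < g n := by
  intro n hn a ha hneg
  have h2 : (1 : ℝ) ≤ G n 2 := (bigG hk hG0 hG1 hG n 2 le_rfl).2 hn
  have hc : ContinuousOn (G n) (Set.Icc a 2) := (contG hG0 hG1 hG n).continuousOn
  have h0 : (0 : ℝ) ∈ Set.Icc (G n a) (G n 2) := ⟨hneg.le, by linarith⟩
  obtain ⟨y, hy, hy0⟩ := intermediate_value_Icc ha.le hc h0
  have hyg : y ≤ g n := (hg n hn).2 y hy0
  have hay : a < y := lt_of_le_of_ne hy.1 (fun h => by rw [← h] at hy0; linarith)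
  linarith

lemma posAbove (hk : 1 ≤ k) (hG0 : ∀ x, G 0 x = -1) (hG1 : ∀ x, G 1 x = x - 1)
    (hG : ∀ n, 2 ≤ n → ∀ x, G n x = x ^ k * G (n - 1) x + G (n - 2) x)
    (hg : ∀ n, 1 ≤ n → G n (g n) = 0 ∧ ∀ x : ℝ, G n x = 0 → x ≤ g n) :
    ∀ n, 1 ≤ n → ∀ x : ℝ, g n < x → 0 < G n x := by
  intro n hn x hx
  rcases lt_trichotomy (G n x) 0 with h | h | h
  · rcases lt_or_ge x 2 with h2 | h2
    · exact absurd (rootAbove hk hG0 hG1 hG hg n hn x h2 h) (by linarith)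
    · have := (bigG hk hG0 hG1 hG n x h2).2 hn; linarith
  · exact absurd ((hg n hn).2 x h) (by linarith)
  · exact h

lemma gLt2 (hk : 1 ≤ k) (hG0 : ∀ x, G 0 x = -1) (hG1 : ∀ x, G 1 x = x - 1)
    (hG : ∀ n, 2 ≤ n → ∀ x, G n x = x ^ k * G (n - 1) x + G (n - 2) x)
    (hg : ∀ n, 1 ≤ n → G n (g n) = 0 ∧ ∀ x : ℝ, G n x = 0 → x ≤ g n) :
    ∀ n, 1 ≤ n → g n < 2 := by
  intro n hn
  by_contra h
  push_neg at h
  have := (bigG hk hG0 hG1 hG n (g n) h).2 hn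
  have := (hg n hn).1
  linarith

lemma gGt1 (hk : 1 ≤ k) (hG0 : ∀ x, G 0 x = -1) (hG1 : ∀ x, G 1 x = x - 1)
    (hG : ∀ n, 2 ≤ n → ∀ x, G n x = x ^ k * G (n - 1) x + G (n - 2) x)
    (hg : ∀ n, 1 ≤ n → G n (g n) = 0 ∧ ∀ x : ℝ, G n x = 0 → x ≤ g n) :
    ∀ n, 2 ≤ n → 1 < g n := by
  intro n hn
  have h1 : G n 1 ≤ -1 := (oneG hG0 hG1 hG n).2 (by omega)
  exact rootAbove hk hG0 hG1 hG hg n (by omega) 1 one_lt_two (by linarith)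

lemma gOne (hG1 : ∀ x, G 1 x = x - 1)
    (hg : ∀ n, 1 ≤ n → G n (g n) = 0 ∧ ∀ x : ℝ, G n x = 0 → x ≤ g n) :
    g 1 = 1 := by
  have := (hg 1 le_rfl).1
  rw [hG1] at this
  linarith

lemma oddChain (hk : 1 ≤ k) (hG0 : ∀ x, G 0 x = -1) (hG1 : ∀ x, G 1 x = x - 1)
    (hG : ∀ n, 2 ≤ n → ∀ x, G n x = x ^ k * G (n - 1) x + G (n - 2) x)
    (hg : ∀ n, 1 ≤ n → G n (g n) = 0 ∧ ∀ x : ℝ, G n x = 0 → x ≤ g n) :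
    ∀ n, g (2 * n + 1) < g (2 * n + 3) := by
  intro n
  induction n with
  | zero =>
    simpa [gOne hG1 hg] using gGt1 hk hG0 hG1 hG hg 3 (by omega)
  | succ m ih =>
    have hmm : 2 * (m + 1) + 1 = 2 * m + 3 := by ring
    have hmm2 : 2 * (m + 1) + 3 = 2 * m + 5 := by ring
    rw [hmm, hmm2]
    set a := g (2 * m + 3) with ha
    have ha1 : 1 < a := gGt1 hk hG0 hG1 hG hg _ (by omega)
    have ha2 : a < 2 := gLt2 hk hG0 hG1 hG hg _ (by omega)
    have hroot : G (2 * m + 3) a = 0 := (hg _ (by omega)).1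
    have hak : 0 < a ^ k := by positivity
    have h1 : 0 < G (2 * m + 1) a := posAbove hk hG0 hG1 hG hg _ (by omega) a ih
    have e3 : G (2 * m + 3) a = a ^ k * G (2 * m + 2) a + G (2 * m + 1) a := by
      have := hG (2 * m + 3) (by omega) a
      have i1 : 2 * m + 3 - 1 = 2 * m + 2 := by omega
      have i2 : 2 * m + 3 - 2 = 2 * m + 1 := by omega
      rwa [i1, i2] at this
    have h2 : G (2 * m + 2) a < 0 := by nlinarith
    have e4 : G (2 * m + 4) a = a ^ k * G (2 * m + 3) a + G (2 * m + 2) a := by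
      have := hG (2 * m + 4) (by omega) a
      have i1 : 2 * m + 4 - 1 = 2 * m + 3 := by omega
      have i2 : 2 * m + 4 - 2 = 2 * m + 2 := by omega
      rwa [i1, i2] at this
    have h4 : G (2 * m + 4) a < 0 := by rw [e4, hroot]; linarith
    have e5 : G (2 * m + 5) a = a ^ k * G (2 * m + 4) a + G (2 * m + 3) a := by
      have := hG (2 * m + 5) (by omega) a
      have i1 : 2 * m + 5 - 1 = 2 * m + 4 := by omega
      have i2 : 2 * m + 5 - 2 = 2 * m + 3 := by omega
      rwa [i1, i2] at this
    have h5 : G (2 * m + 5) a < 0 := by rw [e5, hroot]; nlinarith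
    exact rootAbove hk hG0 hG1 hG hg _ (by omega) a ha2 h5

lemma oddEven (hk : 1 ≤ k) (hG0 : ∀ x, G 0 x = -1) (hG1 : ∀ x, G 1 x = x - 1)
    (hG : ∀ n, 2 ≤ n → ∀ x, G n x = x ^ k * G (n - 1) x + G (n - 2) x)
    (hg : ∀ n, 1 ≤ n → G n (g n) = 0 ∧ ∀ x : ℝ, G n x = 0 → x ≤ g n) :
    ∀ n, g (2 * n + 1) < g (2 * n + 2) := by
  intro n
  match n with
  | 0 =>
    simpa [gOne hG1 hg] using gGt1 hk hG0 hG1 hG hg 2 (by omega)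
  | (m + 1) =>
    have hmm : 2 * (m + 1) + 1 = 2 * m + 3 := by ring
    have hmm2 : 2 * (m + 1) + 2 = 2 * m + 4 := by ring
    rw [hmm, hmm2]
    set a := g (2 * m + 3) with ha
    have ha1 : 1 < a := gGt1 hk hG0 hG1 hG hg _ (by omega)
    have ha2 : a < 2 := gLt2 hk hG0 hG1 hG hg _ (by omega)
    have hroot : G (2 * m + 3) a = 0 := (hg _ (by omega)).1
    have hak : 0 < a ^ k := by positivity
    have h1 : 0 < G (2 * m + 1) a :=
      posAbove hk hG0 hG1 hG hg _ (by omega) a (oddChain hk hG0 hG1 hG hg m)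
    have e3 : G (2 * m + 3) a = a ^ k * G (2 * m + 2) a + G (2 * m + 1) a := by
      have := hG (2 * m + 3) (by omega) a
      have i1 : 2 * m + 3 - 1 = 2 * m + 2 := by omega
      have i2 : 2 * m + 3 - 2 = 2 * m + 1 := by omega
      rwa [i1, i2] at this
    have h2 : G (2 * m + 2) a < 0 := by nlinarith
    have e4 : G (2 * m + 4) a = a ^ k * G (2 * m + 3) a + G (2 * m + 2) a := by
      have := hG (2 * m + 4) (by omega) a
      have i1 : 2 * m + 4 - 1 = 2 * m + 3 := by omega
      have i2 : 2 * m + 4 - 2 = 2 * m + 2 := by omega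
      rwa [i1, i2] at this
    have h4 : G (2 * m + 4) a < 0 := by rw [e4, hroot]; linarith
    exact rootAbove hk hG0 hG1 hG hg _ (by omega) a ha2 h4

lemma evenStep (hk : 1 ≤ k) (hG0 : ∀ x, G 0 x = -1) (hG1 : ∀ x, G 1 x = x - 1)
    (hG : ∀ n, 2 ≤ n → ∀ x, G n x = x ^ k * G (n - 1) x + G (n - 2) x)
    (hg : ∀ n, 1 ≤ n → G n (g n) = 0 ∧ ∀ x : ℝ, G n x = 0 → x ≤ g n) :
    ∀ m, g (2 * m + 4) < g (2 * m + 2) := by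
  intro m
  have key : ∀ x : ℝ, g (2 * m + 2) ≤ x → 0 < G (2 * m + 4) x := by
    intro x hx
    have hg1 : 1 < g (2 * m + 2) := gGt1 hk hG0 hG1 hG hg _ (by omega)
    have hx1 : (1 : ℝ) < x := lt_of_lt_of_le hg1 hx
    have hxk : 0 < x ^ k := by positivity
    have h22 : 0 ≤ G (2 * m + 2) x := by
      rcases eq_or_lt_of_le hx with h | h
      · rw [← h]; exact le_of_eq ((hg _ (by omega)).1).symm
      · exact (posAbove hk hG0 hG1 hG hg _ (by omega) x h).le
    have h21 : 0 < G (2 * m + 1) x :=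
      posAbove hk hG0 hG1 hG hg _ (by omega) x
        (lt_of_lt_of_le (oddEven hk hG0 hG1 hG hg m) hx)
    have e3 : G (2 * m + 3) x = x ^ k * G (2 * m + 2) x + G (2 * m + 1) x := by
      have := hG (2 * m + 3) (by omega) x
      have i1 : 2 * m + 3 - 1 = 2 * m + 2 := by omega
      have i2 : 2 * m + 3 - 2 = 2 * m + 1 := by omega
      rwa [i1, i2] at this
    have e4 : G (2 * m + 4) x = x ^ k * G (2 * m + 3) x + G (2 * m + 2) x := by
      have := hG (2 * m + 4) (by omega) x
      have i1 : 2 * m + 4 - 1 = 2 * m + 3 := by omega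
      have i2 : 2 * m + 4 - 2 = 2 * m + 2 := by omega
      rwa [i1, i2] at this
    rw [e4, e3]
    nlinarith [mul_pos hxk h21, mul_nonneg (mul_nonneg hxk.le hxk.le) h22]
  by_contra h
  push_neg at h
  have := key (g (2 * m + 4)) h
  have := (hg (2 * m + 4) (by omega)).1
  linarith

end

theorem g_even_strict_anti (k : ℕ) (hk : 1 ≤ k) (G : ℕ → ℝ → ℝ)
    (hG0 : ∀ x, G 0 x = -1) (hG1 : ∀ x, G 1 x = x - 1)
    (hG : ∀ n, 2 ≤ n → ∀ x, G n x = x ^ k * G (n - 1) x + G (n - 2) x)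
    (g : ℕ → ℝ)
    (hg : ∀ n, 1 ≤ n → G n (g n) = 0 ∧ ∀ x : ℝ, G n x = 0 → x ≤ g n) :
    StrictAntiOn (fun n => g (2 * n)) (Set.Ici 1) := by
  have step : ∀ c : ℕ, 1 ≤ c → g (2 * (c + 1)) < g (2 * c) := by
    intro c hc
    obtain ⟨m, rfl⟩ : ∃ m, c = m + 1 := ⟨c - 1, by omega⟩
    have h1 : 2 * (m + 1 + 1) = 2 * m + 4 := by ring
    have h2 : 2 * (m + 1) = 2 * m + 2 := by ring
    rw [h1, h2]
    exact evenStep hk hG0 hG1 hG hg m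
  have aux : ∀ b a : ℕ, 1 ≤ a → a < b → g (2 * b) < g (2 * a) := by
    intro b
    induction b with
    | zero => intro a ha hab; omega
    | succ c ih =>
      intro a ha hab
      rcases eq_or_lt_of_le (Nat.lt_succ_iff.mp hab) with h | h
      · rw [← h]; exact step a ha
      · exact lt_trans (step c (by omega)) (ih a ha h)
  intro a ha b hb hab
  exact aux b a ha hab
end

section
/- Fix a positive integer k and let g_n denote the maximal real root of G_n^{(k)}. Then the sequence (g_{2n-1})_{n≥1} is strictly increasing. -/
private lemma aux_cont (k : ℕ) (G : ℕ → ℝ → ℝ)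
    (hG0 : ∀ x, G 0 x = -1) (hG1 : ∀ x, G 1 x = x - 1)
    (hG : ∀ n, 2 ≤ n → ∀ x, G n x = x ^ k * G (n - 1) x + G (n - 2) x) :
    ∀ n, Continuous (G n) := by
  intro n
  induction n using Nat.strong_induction_on with
  | _ n ih =>
    match n with
    | 0 =>
      have h : G 0 = fun _ => (-1 : ℝ) := funext hG0
      rw [h]; exact continuous_const
    | 1 =>
      have h : G 1 = fun x => x - 1 := funext hG1
      rw [h]; exact continuous_id.sub continuous_const
    | (m+2) =>
      have h : G (m+2) = fun x => x ^ k * G (m+1) x + G m x :=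
        funext fun x => hG (m+2) (by omega) x
      rw [h]
      exact ((continuous_pow k).mul (ih (m+1) (by omega))).add (ih m (by omega))

private lemma aux_ge (k : ℕ) (hk : 1 ≤ k) (G : ℕ → ℝ → ℝ)
    (hG0 : ∀ x, G 0 x = -1) (hG1 : ∀ x, G 1 x = x - 1)
    (hG : ∀ n, 2 ≤ n → ∀ x, G n x = x ^ k * G (n - 1) x + G (n - 2) x) :
    ∀ n, 1 ≤ n → ∀ x : ℝ, 2 ≤ x → 1 ≤ G n x := by
  intro n
  induction n using Nat.strong_induction_on with
  | _ n ih =>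
    match n with
    | 0 => intro h; omega
    | 1 =>
      intro _ x hx
      rw [hG1]; linarith
    | 2 =>
      intro _ x hx
      have h := hG 2 (by omega) x
      have hpow : (2 : ℝ) ≤ x ^ k := le_trans hx (le_self_pow₀ (by linarith) (by omega))
      rw [hG1, hG0] at h
      nlinarith
    | (m+3) =>
      intro _ x hx
      have h := hG (m+3) (by omega) x
      simp only [show m+3-1 = m+2 by omega, show m+3-2 = m+1 by omega] at h
      have h1 : 1 ≤ G (m+2) x := ih (m+2) (by omega) (by omega) x hx
      have h2 : 1 ≤ G (m+1) x := ih (m+1) (by omega) (by omega) x hx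
      have hpow : (2 : ℝ) ≤ x ^ k := le_trans hx (le_self_pow₀ (by linarith) (by omega))
      rw [h]; nlinarith

theorem g_odd_strict_mono (k : ℕ) (hk : 1 ≤ k) (G : ℕ → ℝ → ℝ)
    (hG0 : ∀ x, G 0 x = -1) (hG1 : ∀ x, G 1 x = x - 1)
    (hG : ∀ n, 2 ≤ n → ∀ x, G n x = x ^ k * G (n - 1) x + G (n - 2) x)
    (g : ℕ → ℝ)
    (hg : ∀ n, 1 ≤ n → G n (g n) = 0 ∧ ∀ x : ℝ, G n x = 0 → x ≤ g n) :
    StrictMonoOn (fun n => g (2 * n - 1)) (Set.Ici 1) := by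
  -- G n is positive strictly beyond its largest root
  have pos : ∀ n, 1 ≤ n → ∀ x : ℝ, g n < x → 0 < G n x := by
    intro n hn x hx
    by_contra hcon
    push_neg at hcon
    have hne : G n x ≠ 0 := fun h0 => absurd ((hg n hn).2 x h0) (not_le.mpr hx)
    have hneg : G n x < 0 := lt_of_le_of_ne hcon hne
    have hx2 : x < 2 := by
      by_contra h2
      push_neg at h2
      have := aux_ge k hk G hG0 hG1 hG n hn x h2
      linarith
    have hG2 : (1 : ℝ) ≤ G n 2 := aux_ge k hk G hG0 hG1 hG n hn 2 le_rfl
    have hcont : ContinuousOn (G n) (Set.Icc x 2) :=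
      (aux_cont k G hG0 hG1 hG n).continuousOn
    have hmem : (0 : ℝ) ∈ Set.Icc (G n x) (G n 2) := ⟨le_of_lt hneg, by linarith⟩
    obtain ⟨r, hr, hr0⟩ := intermediate_value_Icc (le_of_lt hx2) hcont hmem
    have := (hg n hn).2 r hr0
    have := hr.1
    linarith
  -- from negativity to strict inequality with the largest root
  have lt_of_neg : ∀ m, 1 ≤ m → ∀ a : ℝ, G m a < 0 → a < g m := by
    intro m hm a ha
    rcases lt_trichotomy a (g m) with h | h | h
    · exact h
    · rw [h] at ha; rw [(hg m hm).1] at ha; linarith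
    · have := pos m hm a h; linarith
  have g1 : g 1 = 1 := by
    have := (hg 1 le_rfl).1
    rw [hG1] at this; linarith
  -- the key step
  have step : ∀ n : ℕ, g (2*n+1) < g (2*n+3) := by
    intro n
    induction n with
    | zero =>
      -- show g 1 < g 3 via G 3 1 = -1
      have hG21 : G 2 1 = -1 := by
        have h := hG 2 (by omega) 1
        rw [hG1, hG0] at h
        simpa using h
      have hG31 : G 3 1 = -1 := by
        have h := hG 3 (by omega) 1
        rw [hG1, hG21] at h
        simpa using h
      have := lt_of_neg 3 (by omega) 1 (by rw [hG31]; norm_num)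
      simpa [g1] using this
    | succ n ih =>
      have hsimp1 : 2*(n+1)+1 = 2*n+3 := by ring
      have hsimp2 : 2*(n+1)+3 = 2*n+5 := by ring
      rw [hsimp1, hsimp2]
      set a := g (2*n+3) with ha
      have ha0 : G (2*n+3) a = 0 := (hg (2*n+3) (by omega)).1
      have e3 : G (2*n+3) a = a ^ k * G (2*n+2) a + G (2*n+1) a := by
        have h := hG (2*n+3) (by omega) a
        simpa only [show 2*n+3-1 = 2*n+2 by omega, show 2*n+3-2 = 2*n+1 by omega] using h
      have e4 : G (2*n+4) a = a ^ k * G (2*n+3) a + G (2*n+2) a := by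
        have h := hG (2*n+4) (by omega) a
        simpa only [show 2*n+4-1 = 2*n+3 by omega, show 2*n+4-2 = 2*n+2 by omega] using h
      have e5 : G (2*n+5) a = a ^ k * G (2*n+4) a + G (2*n+3) a := by
        have h := hG (2*n+5) (by omega) a
        simpa only [show 2*n+5-1 = 2*n+4 by omega, show 2*n+5-2 = 2*n+3 by omega] using h
      have hpos : 0 < G (2*n+1) a := pos (2*n+1) (by omega) a ih
      have e4' : G (2*n+4) a = G (2*n+2) a := by rw [e4, ha0]; ring
      have e5' : G (2*n+5) a = a ^ k * G (2*n+2) a := by rw [e5, e4', ha0]; ring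
      have hkey : G (2*n+5) a = - G (2*n+1) a := by
        rw [e5']; rw [e3] at ha0; linarith
      exact lt_of_neg (2*n+5) (by omega) a (by rw [hkey]; linarith)
  -- conclude
  intro a ha b hb hab
  simp only [Set.mem_Ici] at ha hb
  have key : StrictMono (fun m : ℕ => g (2*m+1)) := by
    apply strictMono_nat_of_lt_succ
    intro m
    have := step m
    have h : 2*(m+1)+1 = 2*m+3 := by ring
    simpa [h] using this
  simp only
  rw [show 2*a-1 = 2*(a-1)+1 by omega, show 2*b-1 = 2*(b-1)+1 by omega]
  exact key (by omega)
end

section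
/- If k is an even positive integer, then H^{(k)}(x) = x^k − x^{k−1} + x − 2 has exactly one negative real root. -/
theorem H_even_unique_neg_root (k : ℕ) (hk : 1 ≤ k) (heven : Even k) :
    ∃! x : ℝ, x < 0 ∧ x ^ k - x ^ (k - 1) + x - 2 = 0 := by
  have hk2 : 2 ≤ k := by
    rcases heven with ⟨m, hm⟩; omega
  have hodd : Odd (k - 1) := Nat.Even.sub_odd hk heven odd_one
  have hk1 : k - 1 ≠ 0 := by omega
  set g : ℝ → ℝ := fun y => y ^ k + y ^ (k - 1) - y - 2 with hg
  -- rewrite the expression via y = -x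
  have key : ∀ x : ℝ, x ^ k - x ^ (k - 1) + x - 2 = g (-x) := by
    intro x
    simp only [hg]
    rw [heven.neg_pow, hodd.neg_pow]
    ring
  -- g is negative on (0, 1]
  have hsmall : ∀ y : ℝ, 0 < y → y ≤ 1 → g y < 0 := by
    intro y hy hy1
    have h1 : y ^ k ≤ 1 := pow_le_one₀ hy.le hy1
    have h2 : y ^ (k - 1) ≤ 1 := pow_le_one₀ hy.le hy1
    simp only [hg]; linarith
  -- g strictly increasing on [1, ∞)
  have hmono : ∀ a b : ℝ, 1 ≤ a → a < b → g a < g b := by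
    intro a b ha hab
    have ha0 : (0 : ℝ) ≤ a := by linarith
    have h1 : a ^ (k - 1) ≤ b ^ (k - 1) := pow_le_pow_left₀ ha0 hab.le _
    have h2 : a ^ (k - 1) < b ^ (k - 1) := pow_lt_pow_left₀ hab ha0 hk1
    have h3 : (1 : ℝ) ≤ a ^ (k - 1) := one_le_pow₀ ha
    have hae : a ^ k = a * a ^ (k - 1) := by
      rw [← pow_succ']; congr 1; omega
    have hbe : b ^ k = b * b ^ (k - 1) := by
      rw [← pow_succ']; congr 1; omega
    have hb0 : (0 : ℝ) < b := by linarith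
    have h4 : b * a ^ (k - 1) < b * b ^ (k - 1) := by
      exact mul_lt_mul_of_pos_left h2 hb0
    have h5 : (b - a) * 1 ≤ (b - a) * a ^ (k - 1) := by
      apply mul_le_mul_of_nonneg_left h3 (by linarith)
    simp only [hg]
    nlinarith
  -- existence of a root in [1, 2]
  have hg1 : g 1 = -1 := by norm_num [hg]
  have hg2 : 0 ≤ g 2 := by
    have h1 : (2 : ℝ) ^ 2 ≤ 2 ^ k := pow_le_pow_right₀ one_le_two hk2
    have h2 : (2 : ℝ) ^ 1 ≤ 2 ^ (k - 1) := pow_le_pow_right₀ one_le_two (by omega)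
    simp only [hg]; norm_num at h1 h2 ⊢; linarith
  have hcont : ContinuousOn g (Set.Icc 1 2) := by
    simp only [hg]; fun_prop
  have hiv : (0 : ℝ) ∈ g '' Set.Icc 1 2 := by
    apply intermediate_value_Icc (by norm_num : (1:ℝ) ≤ 2) hcont
    rw [hg1]; constructor <;> [norm_num; exact hg2]
  obtain ⟨y, hy, hgy⟩ := hiv
  have hy1 : 1 ≤ y := hy.1
  have hypos : 0 < y := by linarith
  refine ⟨-y, ⟨by linarith, by rw [key, neg_neg]; exact hgy⟩, ?_⟩
  rintro x ⟨hx, hxroot⟩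
  rw [key] at hxroot
  set y' := -x with hy'
  have hy'pos : 0 < y' := by simp [hy']; linarith
  -- y' > 1 (else g y' < 0)
  have hy'1 : 1 ≤ y' := by
    by_contra h
    have := hsmall y' hy'pos (by linarith)
    linarith [hxroot, this]
  -- y' = y by strict monotonicity
  have : y' = y := by
    rcases lt_trichotomy y' y with h | h | h
    · exfalso; have := hmono y' y hy'1 h; rw [hxroot, hgy] at this; linarith
    · exact h
    · exfalso; have := hmono y y' hy1 h; rw [hxroot, hgy] at this; linarith
  rw [hy'] at this; linarith
end

section
/- Fix a positive integer k and let g_n be the maximal real root of G_n^{(k)} for n ≥ 1. Then 1 ≤ g_n ≤ 2 for all n ≥ 1. -/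
theorem g_bounds (k : ℕ) (hk : 1 ≤ k) (G : ℕ → ℝ → ℝ)
    (hG0 : ∀ x, G 0 x = -1) (hG1 : ∀ x, G 1 x = x - 1)
    (hG : ∀ n, 2 ≤ n → ∀ x, G n x = x ^ k * G (n - 1) x + G (n - 2) x)
    (g : ℕ → ℝ)
    (hg : ∀ n, 1 ≤ n → G n (g n) = 0 ∧ ∀ x : ℝ, G n x = 0 → x ≤ g n) :
    ∀ n, 1 ≤ n → 1 ≤ g n ∧ g n ≤ 2 := by
  -- continuity
  have hcont : ∀ n, Continuous (G n) := by
    intro n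
    induction n using Nat.strong_induction_on with
    | _ n ih =>
      match n with
      | 0 =>
        have : G 0 = fun _ => (-1 : ℝ) := funext hG0
        rw [this]; exact continuous_const
      | 1 =>
        have : G 1 = fun x => x - 1 := funext hG1
        rw [this]; exact continuous_id.sub continuous_const
      | (m+2) =>
        have : G (m+2) = fun x => x ^ k * G (m+1) x + G m x := by
          funext x
          have := hG (m+2) (by omega) x
          simpa using this
        rw [this]
        exact ((continuous_pow k).mul (ih (m+1) (by omega))).add (ih m (by omega))
  -- G n 1 ≤ 0
  have h1 : ∀ n, G n 1 ≤ 0 := by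
    intro n
    induction n using Nat.strong_induction_on with
    | _ n ih =>
      match n with
      | 0 => rw [hG0]; norm_num
      | 1 => rw [hG1]; norm_num
      | (m+2) =>
        have := hG (m+2) (by omega) 1
        simp only [show m+2-1 = m+1 from rfl, show m+2-2 = m from rfl, one_pow, one_mul] at this
        rw [this]
        have h1' := ih (m+1) (by omega)
        have h2' := ih m (by omega)
        linarith
  -- G n x ≥ x - 1 for x ≥ 2, n ≥ 1
  have h2 : ∀ n, 1 ≤ n → ∀ x : ℝ, 2 ≤ x → x - 1 ≤ G n x := by
    intro n
    induction n using Nat.strong_induction_on with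
    | _ n ih =>
      match n with
      | 0 => intro h; omega
      | 1 => intro _ x hx; rw [hG1]
      | (m+2) =>
        intro _ x hx
        have hx1 : (1:ℝ) ≤ x := by linarith
        have hxk : x ≤ x ^ k := le_self_pow₀ hx1 (by omega)
        have heq := hG (m+2) (by omega) x
        simp only [show m+2-1 = m+1 from rfl, show m+2-2 = m from rfl] at heq
        rw [heq]
        match m with
        | 0 =>
          rw [hG1, hG0]
          have h2x : (2:ℝ) ≤ x ^ k := le_trans hx hxk
          nlinarith
        | (p+1) =>
          have ha := ih (p+2) (by omega) (by omega) x hx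
          have hb := ih (p+1) (by omega) (by omega) x hx
          have hk1 : (1:ℝ) ≤ x ^ k := one_le_pow₀ hx1
          nlinarith
  intro n hn
  obtain ⟨hroot, hmax⟩ := hg n hn
  constructor
  · -- lower bound via IVT
    have hA : G n 1 ≤ 0 := h1 n
    have hB : (0:ℝ) ≤ G n 2 := by
      have := h2 n hn 2 le_rfl
      linarith
    have hivt := intermediate_value_Icc (by norm_num : (1:ℝ) ≤ 2) (hcont n).continuousOn
    have h0 : (0:ℝ) ∈ Set.Icc (G n 1) (G n 2) := ⟨hA, hB⟩
    obtain ⟨c, hc, hc0⟩ := hivt h0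
    have := hmax c hc0
    linarith [hc.1]
  · by_contra h
    push_neg at h
    have := h2 n hn (g n) (le_of_lt h)
    rw [hroot] at this
    linarith
end
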